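/- Fix n ≥ 3 and an admissible total order ≺ on C_n. For every subset S ⊆ C_n the following are equivalent: (1) no subset of S is a broken circuit with respect to ≺, and there exists a function z : {1,…,n−1} → ℂ with z(1) = 0, z(n−1) = 1 and z(i) = z(j) for every {i,j} ∈ S; (2) S is a gravity diagram, i.e. there are no integers i < j < k with {i,j} ∈ S and {j,k} ∈ S, and no integers i < j < k < l with {i,k} ∈ S, {j,k} ∈ S and {j,l} ∈ S. -/

import Mathlib

open scoped BigOperators

/-- `ChordP n p` says that the ordered pair `p = (i, j)` represents a chord of the standard
`n`-gon, i.e. an element `{i, j}` of `C_n`: `1 ≤ i < j ≤ n - 1` and `(i, j) ≠ (1, n - 1)`. -/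
def ChordP (n : ℕ) (p : ℕ × ℕ) : Prop :=
  1 ≤ p.1 ∧ p.1 < p.2 ∧ p.2 ≤ n - 1 ∧ ¬(p.1 = 1 ∧ p.2 = n - 1)

instance (n : ℕ) : DecidablePred (ChordP n) := fun p => by
  unfold ChordP; infer_instance

/-- The set `C_n` of chords of the `n`-gon, as a type. -/
def GChord (n : ℕ) : Type := {p : ℕ × ℕ // ChordP n p}

noncomputable instance (n : ℕ) : LinearOrder (GChord n) :=
  LinearOrder.lift' (fun c : {p : ℕ × ℕ // ChordP n p} => toLex c.val)
    (fun a b h => Subtype.ext (toLex.injective h))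

/-- `{i, j} ∈ D`, for a diagram `D` of chords. -/
def memPair {n : ℕ} (D : Finset (GChord n)) (i j : ℕ) : Prop :=
  ∃ c ∈ D, c.val = (i, j)

/-- A gravity (chord) diagram: a subset of `C_n` containing no pair `{i,j}, {j,k}`
with `i < j < k` and no triple `{i,k}, {j,k}, {j,l}` with `i < j < k < l`. -/
def IsGravityDiagram {n : ℕ} (D : Finset (GChord n)) : Prop :=
  (¬ ∃ i j k : ℕ, i < j ∧ j < k ∧ memPair D i j ∧ memPair D j k) ∧
  (¬ ∃ i j k l : ℕ, i < j ∧ j < k ∧ k < l ∧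
      memPair D i k ∧ memPair D j k ∧ memPair D j l)

/-- The exterior algebra `Λ_n` over `ℚ` on generators `e_c`, `c ∈ C_n`. -/
abbrev GravAlg (n : ℕ) : Type := ExteriorAlgebra ℚ (GChord n →₀ ℚ)

/-- The generator `e_c` of `Λ_n`. -/
noncomputable def e {n : ℕ} (c : GChord n) : GravAlg n :=
  ExteriorAlgebra.ι ℚ (Finsupp.single c 1)

/-- The monomial `e_S = ∏_{c ∈ S} e_c`, the product taken in the fixed (lexicographic)
order on chords. -/
noncomputable def eMon {n : ℕ} (S : Finset (GChord n)) : GravAlg n :=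
  ((S.sort (· ≤ ·)).map e).prod

/-- Adjacency of the vertices `a, b ∈ {1, …, n-1}` in the graph with edge set `A`. -/
def diagAdj {n : ℕ} (A : Finset (GChord n)) (a b : ℕ) : Prop :=
  ∃ c ∈ A, c.val = (a, b) ∨ c.val = (b, a)

/-- Degree of the vertex `a` in the graph with edge set `A`. -/
def diagDeg {n : ℕ} (A : Finset (GChord n)) (a : ℕ) : ℕ :=
  (A.filter (fun c => c.val.1 = a ∨ c.val.2 = a)).card

/-- `A ⊆ C_n` is a circuit: the graph on `{1, …, n-1}` with edge set `A` is a cycle,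
i.e. it is nonempty, every vertex incident to an edge has degree exactly `2`, and any two
incident vertices are connected by a path. -/
def IsCircuit {n : ℕ} (A : Finset (GChord n)) : Prop :=
  A.Nonempty ∧ (∀ a : ℕ, diagDeg A a ≠ 0 → diagDeg A a = 2) ∧
  ∀ a b : ℕ, diagDeg A a ≠ 0 → diagDeg A b ≠ 0 → Relation.ReflTransGen (diagAdj A) a b

/-- A broken circuit with respect to the order `prec`: a circuit with its
`prec`-least element removed. -/
def IsBrokenCircuit {n : ℕ} (prec : GChord n → GChord n → Prop)
    (B : Finset (GChord n)) : Prop :=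
  ∃ (A : Finset (GChord n)) (a : GChord n), IsCircuit A ∧ a ∈ A ∧
    (∀ b ∈ A, b ≠ a → prec a b) ∧ B = A.erase a

section Helpers

variable {n : ℕ}

lemma chord_lt (c : GChord n) : c.val.1 < c.val.2 := c.property.2.1

lemma diagAdj_symm {A : Finset (GChord n)} {a b : ℕ} (h : diagAdj A a b) : diagAdj A b a := by
  obtain ⟨c, hc, h⟩ := h
  exact ⟨c, hc, h.symm⟩

lemma memPair_of_adj {S A : Finset (GChord n)} (hAS : A ⊆ S) {a b : ℕ}
    (h : diagAdj A a b) (hab : a < b) : memPair S a b := by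
  obtain ⟨c, hc, h | h⟩ := h
  · exact ⟨c, hAS hc, h⟩
  · exfalso
    have := chord_lt c
    rw [h] at this
    omega

end Helpers

section Zigzag

variable {n : ℕ}

/-- The central combinatorial lemma: in a gravity diagram there is no injective
path `v 0, …, v r` (`r ≥ 2`) with all edge lengths at most `v r - v 0` and `v 0 < v r`. -/
lemma zigzag_lemma {S A : Finset (GChord n)} (hg : IsGravityDiagram S) (hAS : A ⊆ S)
    (v : ℕ → ℕ) (r : ℕ) (hr : 2 ≤ r)
    (hadj : ∀ t, t < r → diagAdj A (v t) (v (t + 1)))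
    (hinj : ∀ t, t ≤ r → ∀ u, u ≤ r → v t = v u → t = u)
    (hlt : v 0 < v r)
    (hlen : ∀ t, t < r → v (t + 1) ≤ v t + (v r - v 0) ∧ v t ≤ v (t + 1) + (v r - v 0)) :
    False := by
  obtain ⟨cond1, cond2⟩ := hg
  have hup : ∀ t, t < r → v t < v (t + 1) → memPair S (v t) (v (t + 1)) :=
    fun t ht h => memPair_of_adj hAS (hadj t ht) h
  have hdn : ∀ t, t < r → v (t + 1) < v t → memPair S (v (t + 1)) (v t) :=
    fun t ht h => memPair_of_adj hAS (diagAdj_symm (hadj t ht)) h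
  have hne : ∀ t, t ≤ r → ∀ u, u ≤ r → t ≠ u → v t ≠ v u := by
    intro t ht u hu htu heq
    exact htu (hinj t ht u hu heq)
  -- zig : after an up-step, the next step goes down
  have zig : ∀ t, t + 2 ≤ r → v t < v (t + 1) → v (t + 2) < v (t + 1) := by
    intro t ht h
    rcases lt_trichotomy (v (t + 2)) (v (t + 1)) with h' | h' | h'
    · exact h'
    · exact absurd (hinj _ (by omega) _ (by omega) h'.symm) (by omega)
    · exact absurd ⟨v t, v (t + 1), v (t + 2), h, h',
        hup t (by omega) h, hup (t + 1) (by omega) h'⟩ cond1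
  have zag : ∀ t, t + 2 ≤ r → v (t + 1) < v t → v (t + 1) < v (t + 2) := by
    intro t ht h
    rcases lt_trichotomy (v (t + 1)) (v (t + 2)) with h' | h' | h'
    · exact h'
    · exact absurd (hinj _ (by omega) _ (by omega) h') (by omega)
    · exact absurd ⟨v (t + 2), v (t + 1), v t, h', h,
        hdn (t + 1) (by omega) h', hdn t (by omega) h⟩ cond1
  -- window rules from the second gravity condition
  have hW : ∀ t, t + 3 ≤ r → v t < v (t + 2) → v (t + 2) < v (t + 1) →
      v (t + 1) < v (t + 3) → False := by
    intro t ht h1 h2 h3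
    exact cond2 ⟨v t, v (t + 2), v (t + 1), v (t + 3), h1, h2, h3,
      hup t (by omega) (h1.trans h2),
      hdn (t + 1) (by omega) h2,
      hup (t + 2) (by omega) (h2.trans h3)⟩
  have hW' : ∀ t, t + 3 ≤ r → v (t + 3) < v (t + 1) → v (t + 1) < v (t + 2) →
      v (t + 2) < v t → False := by
    intro t ht h1 h2 h3
    exact cond2 ⟨v (t + 3), v (t + 1), v (t + 2), v t, h1, h2, h3,
      hdn (t + 2) (by omega) (h1.trans h2),
      hup (t + 1) (by omega) h2,
      hdn t (by omega) (h2.trans h3)⟩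
  -- the index of the minimum value
  obtain ⟨s, hs, hmin⟩ := Finset.exists_min_image (Finset.range (r + 1)) v
    ⟨0, Finset.mem_range.mpr (by omega)⟩
  rw [Finset.mem_range] at hs
  have hsr : s ≤ r := by omega
  have hmin' : ∀ t, t ≤ r → v s ≤ v t := by
    intro t ht
    exact hmin t (Finset.mem_range.mpr (by omega))
  have hsltr : s < r := by
    rcases Nat.lt_or_ge s r with h | h
    · exact h
    · exfalso
      have : s = r := by omega
      subst this
      exact absurd (hmin' 0 (by omega)) (by omega)
  -- the main induction: valleys ascend, peaks descend after the minimum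
  have main : ∀ k : ℕ,
      (s + 2 * k + 1 ≤ r → v (s + 2 * k) < v (s + 2 * k + 1)) ∧
      (s + 2 * k + 2 ≤ r →
        v (s + 2 * k + 2) < v (s + 2 * k + 1) ∧ v (s + 2 * k) < v (s + 2 * k + 2)) ∧
      (s + 2 * k + 3 ≤ r → v (s + 2 * k + 3) < v (s + 2 * k + 1)) := by
    intro k
    induction k with
    | zero =>
      simp only [Nat.mul_zero, Nat.add_zero]
      have b1 : s + 1 ≤ r → v s < v (s + 1) := by
        intro h
        exact lt_of_le_of_ne (hmin' (s + 1) h) (hne s hsr (s + 1) h (by omega))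
      refine ⟨b1, ?_, ?_⟩
      · intro h
        have h1 := b1 (by omega)
        refine ⟨zig s h h1, ?_⟩
        exact lt_of_le_of_ne (hmin' (s + 2) h) (hne s hsr (s + 2) h (by omega))
      · intro h
        have h1 := b1 (by omega)
        have h2 : v (s + 2) < v (s + 1) := zig s (by omega) h1
        have h0 : v s < v (s + 2) :=
          lt_of_le_of_ne (hmin' (s + 2) (by omega)) (hne s hsr (s + 2) (by omega) (by omega))
        rcases lt_trichotomy (v (s + 3)) (v (s + 1)) with h' | h' | h'
        · exact h'
        · exact absurd (hinj _ (by omega) _ (by omega) h') (by omega)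
        · exact absurd (hW s h h0 h2 h') id
    | succ k ih =>
      obtain ⟨i1, i2, i3⟩ := ih
      have e2 : s + 2 * (k + 1) + 1 = s + 2 * k + 3 := by omega
      have e3 : s + 2 * (k + 1) + 2 = s + 2 * k + 4 := by omega
      have e4 : s + 2 * (k + 1) + 3 = s + 2 * k + 5 := by omega
      have e1 : s + 2 * (k + 1) = s + 2 * k + 2 := by omega
      rw [e2, e3, e4, e1]
      have s1 : s + 2 * k + 3 ≤ r → v (s + 2 * k + 2) < v (s + 2 * k + 3) := by
        intro h
        exact zag (s + 2 * k + 1) (by omega) (i2 (by omega)).1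
      refine ⟨s1, ?_, ?_⟩
      · intro h
        have hs1 := s1 (by omega)
        have s2a : v (s + 2 * k + 4) < v (s + 2 * k + 3) := zig (s + 2 * k + 2) h hs1
        refine ⟨s2a, ?_⟩
        rcases lt_trichotomy (v (s + 2 * k + 2)) (v (s + 2 * k + 4)) with h' | h' | h'
        · exact h'
        · exact absurd (hinj _ (by omega) _ (by omega) h') (by omega)
        · exact absurd (hW' (s + 2 * k + 1) (by omega) h' hs1 (i3 (by omega))) id
      · intro h
        have hs1 := s1 (by omega)
        have s2a : v (s + 2 * k + 4) < v (s + 2 * k + 3) := zig (s + 2 * k + 2) (by omega) hs1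
        have s2b : v (s + 2 * k + 2) < v (s + 2 * k + 4) := by
          rcases lt_trichotomy (v (s + 2 * k + 2)) (v (s + 2 * k + 4)) with h' | h' | h'
          · exact h'
          · exact absurd (hinj _ (by omega) _ (by omega) h') (by omega)
          · exact absurd (hW' (s + 2 * k + 1) (by omega) h' hs1 (i3 (by omega))) id
        rcases lt_trichotomy (v (s + 2 * k + 5)) (v (s + 2 * k + 3)) with h' | h' | h'
        · exact h'
        · exact absurd (hinj _ (by omega) _ (by omega) h') (by omega)
        · exact absurd (hW (s + 2 * k + 2) h s2b s2a h') id
  -- peak chain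
  have chainPeak : ∀ k : ℕ, s + 2 * k + 1 ≤ r → v (s + 2 * k + 1) ≤ v (s + 1) := by
    intro k
    induction k with
    | zero => intro _; simp
    | succ k ih =>
      intro h
      have e2 : s + 2 * (k + 1) + 1 = s + 2 * k + 3 := by omega
      rw [e2] at h ⊢
      have := (main k).2.2 h
      exact le_of_lt (lt_of_lt_of_le this (ih (by omega)))
  -- assembly
  have hvs : v s ≤ v 0 := hmin' 0 (by omega)
  have hstep : v (s + 1) ≤ v s + (v r - v 0) := (hlen s hsltr).1
  have hq : v (s + 1) ≤ v r := by omega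
  rcases Nat.even_or_odd (r - s) with ⟨k, hk⟩ | ⟨k, hk⟩
  · -- r = s + 2k, k ≥ 1
    have hk1 : 1 ≤ k := by omega
    have hre : s + 2 * (k - 1) + 2 = r := by omega
    have h1 : v (s + 2 * (k - 1) + 2) < v (s + 2 * (k - 1) + 1) := ((main (k - 1)).2.1 (by omega)).1
    have h2 : v (s + 2 * (k - 1) + 1) ≤ v (s + 1) := chainPeak (k - 1) (by omega)
    rw [hre] at h1
    omega
  · -- r = s + 2k + 1
    have hre : s + 2 * k + 1 = r := by omega
    have h2 : v (s + 2 * k + 1) ≤ v (s + 1) := chainPeak k (by omega)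
    rw [hre] at h2
    have heq : v (s + 1) = v r := le_antisymm hq h2
    have : s + 1 = r := hinj (s + 1) (by omega) r (le_refl r) heq
    have hvs0 : v 0 ≤ v s := by omega
    have : s = 0 := hinj s hsr 0 (by omega) (le_antisymm hvs hvs0)
    omega

end Zigzag

section PathExistence

variable {n : ℕ}

lemma chord_pair_cases {c d : GChord n} {a b x y : ℕ}
    (hc : c.val = (a, b) ∨ c.val = (b, a)) (hd : d.val = (x, y) ∨ d.val = (y, x))
    (h : c = d) : (a = x ∧ b = y) ∨ (a = y ∧ b = x) := by
  subst h
  rcases hc with h1 | h1 <;> rcases hd with h2 | h2 <;> rw [h1] at h2 <;>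
    simp only [Prod.mk.injEq] at h2 <;> tauto

lemma chord_eq_of_pair {c d : GChord n} {a b : ℕ}
    (hc : c.val = (a, b) ∨ c.val = (b, a)) (hd : d.val = (a, b) ∨ d.val = (b, a)) :
    c = d := by
  have hc' := chord_lt c
  have hd' := chord_lt d
  apply Subtype.ext
  rcases hc with h | h <;> rcases hd with h' | h' <;> rw [h, h'] <;> rw [h] at hc' <;>
    rw [h'] at hd' <;> simp at hc' hd' ⊢ <;> omega

lemma incident_of_or {c : GChord n} {a b x : ℕ} (h : c.val = (a, b) ∨ c.val = (b, a))
    (hx : x = a ∨ x = b) : c.val.1 = x ∨ c.val.2 = x := by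
  rcases h with h | h <;> rcases hx with hx | hx <;> subst hx <;> simp [h]

lemma two_le_deg {A : Finset (GChord n)} {x : ℕ} {c d : GChord n}
    (hc : c ∈ A) (hd : d ∈ A)
    (ic : c.val.1 = x ∨ c.val.2 = x) (id' : d.val.1 = x ∨ d.val.2 = x)
    (hne : c ≠ d) : 2 ≤ diagDeg A x := by
  classical
  have hsub : ({c, d} : Finset (GChord n)) ⊆
      A.filter (fun e => e.val.1 = x ∨ e.val.2 = x) := by
    intro e he
    rcases Finset.mem_insert.mp he with h | h
    · subst h; exact Finset.mem_filter.mpr ⟨hc, ic⟩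
    · rw [Finset.mem_singleton] at h; subst h; exact Finset.mem_filter.mpr ⟨hd, id'⟩
  have := Finset.card_le_card hsub
  rwa [Finset.card_pair hne] at this

lemma three_le_deg {A : Finset (GChord n)} {x : ℕ} {c d e : GChord n}
    (hc : c ∈ A) (hd : d ∈ A) (he : e ∈ A)
    (ic : c.val.1 = x ∨ c.val.2 = x) (id' : d.val.1 = x ∨ d.val.2 = x)
    (ie : e.val.1 = x ∨ e.val.2 = x)
    (hcd : c ≠ d) (hce : c ≠ e) (hde : d ≠ e) : 3 ≤ diagDeg A x := by
  classical
  have hsub : ({c, d, e} : Finset (GChord n)) ⊆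
      A.filter (fun f => f.val.1 = x ∨ f.val.2 = x) := by
    intro f hf
    rcases Finset.mem_insert.mp hf with h | h
    · subst h; exact Finset.mem_filter.mpr ⟨hc, ic⟩
    rcases Finset.mem_insert.mp h with h | h
    · subst h; exact Finset.mem_filter.mpr ⟨hd, id'⟩
    · rw [Finset.mem_singleton] at h; subst h; exact Finset.mem_filter.mpr ⟨he, ie⟩
  have hcard := Finset.card_le_card hsub
  have : ({c, d, e} : Finset (GChord n)).card = 3 := by
    rw [Finset.card_insert_of_notMem (by simp [hcd, hce]),
      Finset.card_insert_of_notMem (by simp [hde]), Finset.card_singleton]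
  rw [diagDeg]
  omega

lemma exists_path_of_degrees {A : Finset (GChord n)} {p q : ℕ} (hpq : p ≠ q)
    (hp : diagDeg A p = 1) (hq : diagDeg A q = 1)
    (hx : ∀ x, x ≠ p → x ≠ q → diagDeg A x = 0 ∨ diagDeg A x = 2) :
    ∃ (v : ℕ → ℕ) (r : ℕ), 1 ≤ r ∧ v 0 = p ∧ v r = q ∧
      (∀ t, t < r → diagAdj A (v t) (v (t + 1))) ∧
      (∀ t, t ≤ r → ∀ u, u ≤ r → v t = v u → t = u) := by
  classical
  have hd2 : ∀ x, diagDeg A x ≤ 2 := by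
    intro x
    by_cases hxp : x = p
    · subst hxp; omega
    by_cases hxq : x = q
    · subst hxq; omega
    rcases hx x hxp hxq with h | h <;> omega
  -- length of any injective walk is at most the number of edges
  have hcount : ∀ (v : ℕ → ℕ) (k : ℕ), (∀ t, t < k → diagAdj A (v t) (v (t + 1))) →
      (∀ t, t ≤ k → ∀ u, u ≤ k → v t = v u → t = u) → k ≤ A.card := by
    intro v k hadj hinj
    rcases Nat.eq_zero_or_pos k with hk0 | hkpos
    · omega
    have hch : ∀ t : ℕ, t < k →
        ∃ c, c ∈ A ∧ (c.val = (v t, v (t + 1)) ∨ c.val = (v (t + 1), v t)) :=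
      fun t ht => hadj t ht
    set f : ℕ → GChord n :=
      fun t => if h : t < k then (hch t h).choose else (hch 0 hkpos).choose with hf
    have hspec : ∀ t (h : t < k), f t ∈ A ∧
        ((f t).val = (v t, v (t + 1)) ∨ (f t).val = (v (t + 1), v t)) := by
      intro t h
      simp only [hf, dif_pos h]
      exact (hch t h).choose_spec
    have hmem : ∀ t ∈ Finset.range k, f t ∈ A := by
      intro t ht
      exact (hspec t (Finset.mem_range.mp ht)).1
    have hinjf : Set.InjOn f (Finset.range k) := by
      intro t ht u hu hfe
      simp only [Finset.coe_range, Set.mem_Iio] at ht hu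
      rcases chord_pair_cases (hspec t ht).2 (hspec u hu).2 hfe with ⟨h1, h2⟩ | ⟨h1, h2⟩
      · exact hinj t (by omega) u (by omega) h1
      · have := hinj t (by omega) (u + 1) (by omega) h1
        have := hinj (t + 1) (by omega) u (by omega) h2
        omega
    have := Finset.card_le_card_of_injOn f hmem hinjf
    simpa using this
  -- extension step
  have hext : ∀ (v : ℕ → ℕ) (k : ℕ), v 0 = p →
      (∀ t, t < k → diagAdj A (v t) (v (t + 1))) →
      (∀ t, t ≤ k → ∀ u, u ≤ k → v t = v u → t = u) →
      (∀ t, t ≤ k → v t ≠ q) →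
      ∃ x, diagAdj A (v k) x ∧ (x = q ∨ ∀ t, t ≤ k → x ≠ v t) := by
    intro v k h0 hadj hinj havoid
    rcases Nat.eq_zero_or_pos k with hk0 | hkpos
    · subst hk0
      have h1 : 0 < diagDeg A p := by omega
      obtain ⟨c, hc⟩ := Finset.card_pos.mp h1
      rw [Finset.mem_filter] at hc
      obtain ⟨hcA, hcx⟩ := hc
      have hlt := chord_lt c
      obtain ⟨x, hex, hxp⟩ : ∃ x, (c.val = (p, x) ∨ c.val = (x, p)) ∧ x ≠ p := by
        rcases hcx with h | h
        · exact ⟨c.val.2, Or.inl (by rw [← h]), by omega⟩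
        · exact ⟨c.val.1, Or.inr (by rw [← h]), by omega⟩
      refine ⟨x, ⟨c, hcA, by rw [h0]; exact hex⟩, Or.inr ?_⟩
      intro t ht
      have : t = 0 := by omega
      subst this
      rw [h0]
      exact hxp
    · -- k ≥ 1 : the previous edge
      have hprev := hadj (k - 1) (by omega)
      have hk1 : k - 1 + 1 = k := by omega
      rw [hk1] at hprev
      obtain ⟨ep, hepA, hepv⟩ := hprev
      have hvknp : v k ≠ p := by
        intro h
        rw [← h0] at h
        have := hinj k le_rfl 0 (by omega) h
        omega
      have hvknq : v k ≠ q := havoid k le_rfl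
      have hepi : ep.val.1 = v k ∨ ep.val.2 = v k :=
        incident_of_or hepv (Or.inr rfl)
      have hdeg : diagDeg A (v k) = 2 := by
        rcases hx (v k) hvknp hvknq with h | h
        · exfalso
          have : ep ∈ A.filter (fun c => c.val.1 = v k ∨ c.val.2 = v k) :=
            Finset.mem_filter.mpr ⟨hepA, hepi⟩
          have := Finset.card_pos.mpr ⟨ep, this⟩
          rw [diagDeg] at h
          omega
        · exact h
      obtain ⟨e, heF, heep⟩ : ∃ e ∈ A.filter (fun c => c.val.1 = v k ∨ c.val.2 = v k),
          e ≠ ep := by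
        by_contra hcon
        push_neg at hcon
        have hsub : A.filter (fun c => c.val.1 = v k ∨ c.val.2 = v k) ⊆ {ep} :=
          fun e he => Finset.mem_singleton.mpr (hcon e he)
        have := Finset.card_le_card hsub
        rw [Finset.card_singleton] at this
        rw [diagDeg] at hdeg
        omega
      rw [Finset.mem_filter] at heF
      obtain ⟨heA, hei⟩ := heF
      have helt := chord_lt e
      obtain ⟨x, hex, hxvk⟩ : ∃ x, (e.val = (v k, x) ∨ e.val = (x, v k)) ∧ x ≠ v k := by
        rcases hei with h | h
        · exact ⟨e.val.2, Or.inl (by rw [← h]), by omega⟩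
        · exact ⟨e.val.1, Or.inr (by rw [← h]), by omega⟩
      refine ⟨x, ⟨e, heA, hex⟩, ?_⟩
      by_cases hxq2 : x = q
      · exact Or.inl hxq2
      right
      intro t ht hxt
      -- x = v t for some t ≤ k : contradiction
      have htk : t ≠ k := by
        intro h
        subst h
        exact hxvk hxt
      have htlt : t < k := by omega
      subst hxt
      -- e has endpoints v k, v t
      by_cases htk1 : t = k - 1
      · -- then e = ep
        subst htk1
        apply heep
        refine chord_eq_of_pair (a := v k) (b := v (k - 1)) hex ?_
        rcases hepv with h | h
        · exact Or.inr h
        · exact Or.inl h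
      · rcases Nat.eq_zero_or_pos t with ht0 | htpos
        · subst ht0
          -- e and the chord of edge 0 are two distinct chords at p
          have he0 := hadj 0 (by omega)
          obtain ⟨E0, hE0A, hE0v⟩ := he0
          have hee0 : e ≠ E0 := by
            intro h
            rcases chord_pair_cases hex hE0v h with ⟨h1, h2⟩ | ⟨h1, h2⟩
            · have := hinj k le_rfl 0 (by omega) h1
              omega
            · have := hinj k le_rfl 1 (by omega) h1
              omega
          have := two_le_deg heA hE0A (incident_of_or hex (Or.inr rfl))
            (incident_of_or hE0v (Or.inl rfl)) hee0
          rw [← h0] at hp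
          omega
        · -- 1 ≤ t < k - 1 : three distinct chords at v t
          have het := hadj (t - 1) (by omega)
          have ht1 : t - 1 + 1 = t := by omega
          rw [ht1] at het
          obtain ⟨Et, hEtA, hEtv⟩ := het
          have het1 := hadj t (by omega)
          obtain ⟨Et1, hEt1A, hEt1v⟩ := het1
          have hne1 : e ≠ Et := by
            intro h
            rcases chord_pair_cases hex hEtv h with ⟨h1, h2⟩ | ⟨h1, h2⟩
            · have := hinj k le_rfl (t - 1) (by omega) h1
              omega
            · have := hinj k le_rfl t (by omega) h1
              omega
          have hne2 : e ≠ Et1 := by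
            intro h
            rcases chord_pair_cases hex hEt1v h with ⟨h1, h2⟩ | ⟨h1, h2⟩
            · have := hinj k le_rfl t (by omega) h1
              omega
            · have := hinj k le_rfl (t + 1) (by omega) h1
              omega
          have hne3 : Et ≠ Et1 := by
            intro h
            rcases chord_pair_cases hEtv hEt1v h with ⟨h1, h2⟩ | ⟨h1, h2⟩
            · have := hinj (t - 1) (by omega) t (by omega) h1
              omega
            · have := hinj (t - 1) (by omega) (t + 1) (by omega) h1
              omega
          have := three_le_deg heA hEtA hEt1A (incident_of_or hex (Or.inr rfl))
            (incident_of_or hEtv (Or.inr rfl)) (incident_of_or hEt1v (Or.inl rfl))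
            hne1 hne2 hne3
          have := hd2 (v t)
          omega
  -- the recursion
  have aux : ∀ (m : ℕ) (v : ℕ → ℕ) (k : ℕ), A.card + 1 ≤ k + m → v 0 = p →
      (∀ t, t < k → diagAdj A (v t) (v (t + 1))) →
      (∀ t, t ≤ k → ∀ u, u ≤ k → v t = v u → t = u) →
      (∀ t, t ≤ k → v t ≠ q) →
      ∃ (w : ℕ → ℕ) (r : ℕ), 1 ≤ r ∧ w 0 = p ∧ w r = q ∧
        (∀ t, t < r → diagAdj A (w t) (w (t + 1))) ∧
        (∀ t, t ≤ r → ∀ u, u ≤ r → w t = w u → t = u) := by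
    intro m
    induction m with
    | zero =>
      intro v k hcard h0 hadj hinj havoid
      exact absurd (hcount v k hadj hinj) (by omega)
    | succ m ih =>
      intro v k hcard h0 hadj hinj havoid
      obtain ⟨x, hxadj, hxq⟩ := hext v k h0 hadj hinj havoid
      set v' : ℕ → ℕ := fun t => if t = k + 1 then x else v t with hv'
      have hv'eq : ∀ t, t ≤ k → v' t = v t := by
        intro t ht
        simp only [hv']
        rw [if_neg (by omega)]
      have hv'k1 : v' (k + 1) = x := by simp [hv']
      have hfresh : ∀ t, t ≤ k → x ≠ v t := by
        rcases hxq with h | h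
        · intro t ht hxt
          exact havoid t ht (by rw [← hxt, h])
        · exact h
      have h0' : v' 0 = p := by rw [hv'eq 0 (by omega)]; exact h0
      have hadj' : ∀ t, t < k + 1 → diagAdj A (v' t) (v' (t + 1)) := by
        intro t ht
        rcases Nat.lt_or_ge t k with h | h
        · rw [hv'eq t (by omega), hv'eq (t + 1) (by omega)]
          exact hadj t h
        · have : t = k := by omega
          subst this
          rw [hv'eq t (by omega), hv'k1]
          exact hxadj
      have hinj' : ∀ t, t ≤ k + 1 → ∀ u, u ≤ k + 1 → v' t = v' u → t = u := by
        intro t ht u hu he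
        rcases Nat.lt_or_ge t (k + 1) with h1 | h1 <;> rcases Nat.lt_or_ge u (k + 1) with h2 | h2
        · rw [hv'eq t (by omega), hv'eq u (by omega)] at he
          exact hinj t (by omega) u (by omega) he
        · have : u = k + 1 := by omega
          subst this
          rw [hv'eq t (by omega), hv'k1] at he
          exact absurd he.symm (hfresh t (by omega))
        · have : t = k + 1 := by omega
          subst this
          rw [hv'eq u (by omega), hv'k1] at he
          exact absurd he (hfresh u (by omega))
        · omega
      by_cases hxisq : x = q
      · refine ⟨v', k + 1, by omega, h0', by rw [hv'k1]; exact hxisq, hadj', hinj'⟩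
      · have havoid' : ∀ t, t ≤ k + 1 → v' t ≠ q := by
          intro t ht
          rcases Nat.lt_or_ge t (k + 1) with h | h
          · rw [hv'eq t (by omega)]
            exact havoid t (by omega)
          · have : t = k + 1 := by omega
            subst this
            rw [hv'k1]
            exact hxisq
        exact ih v' (k + 1) (by omega) h0' hadj' hinj' havoid'
  exact aux (A.card + 1) (fun _ => p) 0 (by omega) rfl (by omega)
    (by intro t ht u hu _; omega) (by intro t ht; simpa using hpq)

end PathExistence

section NoBrokenCircuit

variable {n : ℕ}

lemma no_broken_circuit {S : Finset (GChord n)} (hg : IsGravityDiagram S)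
    {prec : GChord n → GChord n → Prop} (hprec : IsStrictTotalOrder (GChord n) prec)
    (hadm : ∀ c d : GChord n, c.val.2 - c.val.1 > d.val.2 - d.val.1 → prec c d)
    {B : Finset (GChord n)} (hBS : B ⊆ S) : ¬ IsBrokenCircuit prec B := by
  classical
  rintro ⟨A, a, ⟨hAne, hdeg, hconn⟩, haA, hmin, hBe⟩
  subst hBe
  haveI : IsStrictTotalOrder (GChord n) prec := hprec
  set p := a.val.1 with hpdef
  set q := a.val.2 with hqdef
  have hplt : p < q := chord_lt a
  have hpq : p ≠ q := by omega
  -- every chord of the broken circuit is at most as long as `a`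
  have hlenB : ∀ c ∈ A.erase a, c.val.2 - c.val.1 ≤ q - p := by
    intro c hc
    rw [Finset.mem_erase] at hc
    obtain ⟨hca, hcA⟩ := hc
    by_contra hcon
    have h1 : prec a c := hmin c hcA hca
    have h2 : prec c a := hadm c a (by omega)
    exact irrefl_of prec a (trans_of prec h1 h2)
  -- degrees in the broken circuit
  have hfe : ∀ x : ℕ, diagDeg (A.erase a) x =
      ((A.filter (fun c => c.val.1 = x ∨ c.val.2 = x)).erase a).card := by
    intro x
    rw [diagDeg, Finset.filter_erase]
  have hdegp : diagDeg (A.erase a) p = 1 := by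
    have hmem : a ∈ A.filter (fun c => c.val.1 = p ∨ c.val.2 = p) :=
      Finset.mem_filter.mpr ⟨haA, Or.inl rfl⟩
    have h2 : diagDeg A p = 2 := by
      apply hdeg
      rw [diagDeg]
      have := Finset.card_pos.mpr ⟨a, hmem⟩
      omega
    rw [hfe, Finset.card_erase_of_mem hmem]
    rw [diagDeg] at h2
    omega
  have hdegq : diagDeg (A.erase a) q = 1 := by
    have hmem : a ∈ A.filter (fun c => c.val.1 = q ∨ c.val.2 = q) :=
      Finset.mem_filter.mpr ⟨haA, Or.inr rfl⟩
    have h2 : diagDeg A q = 2 := by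
      apply hdeg
      rw [diagDeg]
      have := Finset.card_pos.mpr ⟨a, hmem⟩
      omega
    rw [hfe, Finset.card_erase_of_mem hmem]
    rw [diagDeg] at h2
    omega
  have hdegx : ∀ x, x ≠ p → x ≠ q →
      diagDeg (A.erase a) x = 0 ∨ diagDeg (A.erase a) x = 2 := by
    intro x hxp hxq
    have hnm : a ∉ A.filter (fun c => c.val.1 = x ∨ c.val.2 = x) := by
      rw [Finset.mem_filter]
      rintro ⟨-, h | h⟩
      · exact hxp h.symm
      · exact hxq h.symm
    have heq : diagDeg (A.erase a) x = diagDeg A x := by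
      rw [hfe, Finset.erase_eq_of_notMem hnm, diagDeg]
    rw [heq]
    by_cases h : diagDeg A x = 0
    · exact Or.inl h
    · exact Or.inr (hdeg x h)
  obtain ⟨v, r, hr1, h0, hrq, hadj, hinj⟩ :=
    exists_path_of_degrees hpq hdegp hdegq hdegx
  have herase : ∀ c ∈ A.erase a, c ∈ S := fun c hc => hBS hc
  have hr2 : 2 ≤ r := by
    rcases Nat.lt_or_ge r 2 with h | h
    · exfalso
      have : r = 1 := by omega
      subst this
      obtain ⟨c, hcB, hcv⟩ := hadj 0 (by omega)
      rw [h0, hrq] at hcv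
      have hc' : c.val = (p, q) := by
        rcases hcv with h' | h'
        · exact h'
        · exfalso
          have := chord_lt c
          rw [h'] at this
          omega
      have : c = a := Subtype.ext (by rw [hc'])
      subst this
      exact (Finset.mem_erase.mp hcB).1 rfl
    · exact h
  apply zigzag_lemma hg (fun c hc => hBS hc) v r hr2 hadj hinj
  · rw [h0, hrq]; exact hplt
  · intro t ht
    obtain ⟨c, hcB, hcv⟩ := hadj t ht
    have hlen := hlenB c hcB
    have hlt := chord_lt c
    rw [h0, hrq]
    rcases hcv with h' | h' <;> rw [h'] at hlen hlt <;> simp at hlen hlt <;> omega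

section Solvable

variable {n : ℕ}

/-- In a gravity diagram, the vertices `1` and `n-1` are not connected. -/
lemma not_reach {S : Finset (GChord n)} (hg : IsGravityDiagram S) (hn : 3 ≤ n) :
    ¬ Relation.ReflTransGen (diagAdj S) 1 (n - 1) := by
  classical
  intro hreach
  -- pass to a simple graph
  set G : SimpleGraph ℕ :=
    { Adj := fun a b => a ≠ b ∧ diagAdj S a b
      symm := by
        refine ⟨?_⟩
        rintro a b ⟨hne, hadj⟩
        exact ⟨hne.symm, diagAdj_symm hadj⟩
      loopless := ⟨by rintro a ⟨hne, -⟩; exact hne rfl⟩ } with hG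
  have hconv : ∀ a b : ℕ, Relation.ReflTransGen (diagAdj S) a b →
      Relation.ReflTransGen G.Adj a b := by
    intro a b h
    induction h with
    | refl => exact Relation.ReflTransGen.refl
    | tail hab hbc ih =>
      rename_i x y
      by_cases hbceq : x = y
      · subst hbceq; exact ih
      · exact ih.tail ⟨hbceq, hbc⟩
  have hreach' : Relation.ReflTransGen G.Adj 1 (n - 1) := hconv _ _ hreach
  have hR : G.Reachable 1 (n - 1) := by
    rw [SimpleGraph.reachable_iff_reflTransGen]
    exact hreach'
  obtain ⟨w⟩ := hR
  let P := w.toPath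
  have hpath : (P : G.Walk 1 (n - 1)).IsPath := P.2
  set l : List ℕ := (P : G.Walk 1 (n - 1)).support with hl
  have hnodup : l.Nodup := hpath.support_nodup
  have hchain : l.Chain' G.Adj := SimpleGraph.Walk.isChain_adj_support _
  have hlen : l.length = (P : G.Walk 1 (n - 1)).length + 1 :=
    SimpleGraph.Walk.length_support _
  have hlpos : 1 ≤ l.length := by omega
  set r : ℕ := l.length - 1 with hr
  set v : ℕ → ℕ := fun t => l.getD t 0 with hv
  have hv0 : v 0 = 1 := by
    have : l = 1 :: l.tail := SimpleGraph.Walk.support_eq_cons _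
    rw [hv]
    simp only
    rw [this]
    rfl
  have hvr : v r = n - 1 := by
    have hlast : l.getLast (by
        intro h
        rw [h] at hlpos
        simp at hlpos) = n - 1 := SimpleGraph.Walk.getLast_support _
    rw [hv]
    simp only
    rw [List.getD_eq_getElem _ _ (by omega)]
    rw [List.getLast_eq_getElem] at hlast
    exact hlast
  have hadj : ∀ t, t < r → diagAdj S (v t) (v (t + 1)) := by
    intro t ht
    have h1 : t + 1 < l.length := by omega
    have := List.isChain_iff_getElem.mp hchain t (by omega)
    rw [hv]
    simp only
    rw [List.getD_eq_getElem _ _ (by omega), List.getD_eq_getElem _ _ (by omega)]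
    exact this.2
  have hinj : ∀ t, t ≤ r → ∀ u, u ≤ r → v t = v u → t = u := by
    intro t ht u hu he
    rw [hv] at he
    simp only at he
    have ht' : t < l.length := by omega
    have hu' : u < l.length := by omega
    rw [List.getD_eq_get l 0 ⟨t, ht'⟩, List.getD_eq_get l 0 ⟨u, hu'⟩] at he
    have h2 := List.nodup_iff_injective_get.mp hnodup he
    simpa using congrArg Fin.val h2
  have hbound : ∀ t, t < r → v (t + 1) ≤ v t + (v r - v 0) ∧ v t ≤ v (t + 1) + (v r - v 0) := by
    intro t ht
    obtain ⟨c, hcS, hcv⟩ := hadj t ht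
    have h1 := chord_lt c
    have h2 := c.property.1
    have h3 := c.property.2.2.1
    rw [hv0, hvr]
    rcases hcv with h | h <;> rw [h] at h1 h2 h3 <;> simp at h1 h2 h3 <;> omega
  have hr2 : 2 ≤ r := by
    rcases Nat.lt_or_ge r 2 with h | h
    · exfalso
      rcases Nat.lt_or_ge r 1 with h' | h'
      · -- r = 0 : 1 = n - 1
        have hre : r = 0 := by omega
        rw [hre, hv0] at hvr
        omega
      · -- r = 1 : a chord (1, n-1), impossible
        have hre : r = 1 := by omega
        obtain ⟨c, hcS, hcv⟩ := hadj 0 (by omega)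
        have hv1 : v (0 + 1) = n - 1 := by
          rw [hre] at hvr
          simpa using hvr
        rw [hv0, hv1] at hcv
        have h1 := chord_lt c
        have h4 := c.property.2.2.2
        rcases hcv with h | h
        · exact h4 (by rw [h]; exact ⟨rfl, rfl⟩)
        · rw [h] at h1
          simp at h1
          omega
    · exact h
  exact zigzag_lemma hg (le_refl S) v r hr2 hadj hinj (by rw [hv0, hvr]; omega) hbound

lemma exists_solution {S : Finset (GChord n)} (hg : IsGravityDiagram S) (hn : 3 ≤ n) :
    ∃ z : ℕ → ℂ, z 1 = 0 ∧ z (n - 1) = 1 ∧ ∀ c ∈ S, z c.val.1 = z c.val.2 := by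
  classical
  refine ⟨fun x => if Relation.ReflTransGen (diagAdj S) x (n - 1) then 1 else 0, ?_, ?_, ?_⟩
  · show (if Relation.ReflTransGen (diagAdj S) 1 (n - 1) then (1 : ℂ) else 0) = 0
    rw [if_neg (not_reach hg hn)]
  · show (if Relation.ReflTransGen (diagAdj S) (n - 1) (n - 1) then (1 : ℂ) else 0) = 1
    rw [if_pos Relation.ReflTransGen.refl]
  · intro c hc
    have hadj : diagAdj S c.val.1 c.val.2 := ⟨c, hc, Or.inl rfl⟩
    have hiff : Relation.ReflTransGen (diagAdj S) c.val.1 (n - 1) ↔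
        Relation.ReflTransGen (diagAdj S) c.val.2 (n - 1) := by
      constructor
      · intro h
        exact Relation.ReflTransGen.head (diagAdj_symm hadj) h
      · intro h
        exact Relation.ReflTransGen.head hadj h
    show (if Relation.ReflTransGen (diagAdj S) c.val.1 (n - 1) then (1 : ℂ) else 0) =
      (if Relation.ReflTransGen (diagAdj S) c.val.2 (n - 1) then (1 : ℂ) else 0)
    by_cases h : Relation.ReflTransGen (diagAdj S) c.val.1 (n - 1)
    · rw [if_pos h, if_pos (hiff.mp h)]
    · rw [if_neg h, if_neg (fun h' => h (hiff.mpr h'))]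

end Solvable

section Forward

variable {n : ℕ}

lemma deg_pair {A : Finset (GChord n)} {x : ℕ} {c d : GChord n}
    (hA : ∀ e ∈ A, (e.val.1 = x ∨ e.val.2 = x) → e = c ∨ e = d)
    (hc : c ∈ A) (hd : d ∈ A)
    (ic : c.val.1 = x ∨ c.val.2 = x) (idd : d.val.1 = x ∨ d.val.2 = x)
    (hcd : c ≠ d) : diagDeg A x = 2 := by
  classical
  rw [diagDeg]
  have hset : A.filter (fun e => e.val.1 = x ∨ e.val.2 = x) = {c, d} := by
    apply Finset.ext
    intro e
    rw [Finset.mem_filter, Finset.mem_insert, Finset.mem_singleton]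
    constructor
    · rintro ⟨heA, hei⟩
      exact hA e heA hei
    · rintro (rfl | rfl)
      · exact ⟨hc, ic⟩
      · exact ⟨hd, idd⟩
  rw [hset, Finset.card_pair hcd]

lemma chord_ne_of_val {c d : GChord n} (h : c.val ≠ d.val) : c ≠ d :=
  fun he => h (by rw [he])

/-- Case 1 of non-gravity: `{i,j}, {j,k} ∈ S` with `i < j < k` contradicts (1). -/
lemma caseA {S : Finset (GChord n)} (hn : 3 ≤ n)
    {prec : GChord n → GChord n → Prop}
    (hadm : ∀ c d : GChord n, c.val.2 - c.val.1 > d.val.2 - d.val.1 → prec c d)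
    (h1 : ∀ B ⊆ S, ¬ IsBrokenCircuit prec B)
    {z : ℕ → ℂ} (hz1 : z 1 = 0) (hz2 : z (n - 1) = 1)
    (hzS : ∀ c ∈ S, z c.val.1 = z c.val.2)
    {i j k : ℕ} (hij : i < j) (hjk : j < k)
    (m1 : memPair S i j) (m2 : memPair S j k) : False := by
  classical
  obtain ⟨c1, hc1S, hc1v⟩ := m1
  obtain ⟨c2, hc2S, hc2v⟩ := m2
  have p1 := c1.property
  have p2 := c2.property
  rw [hc1v] at p1
  rw [hc2v] at p2
  obtain ⟨h1i, -, hjn, -⟩ := p1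
  obtain ⟨-, -, hkn, -⟩ := p2
  by_cases hdeg : i = 1 ∧ k = n - 1
  · -- degenerate : z 1 = z j = z (n-1), i.e. 0 = 1
    have e1 := hzS c1 hc1S
    have e2 := hzS c2 hc2S
    rw [hc1v] at e1
    rw [hc2v] at e2
    simp only at e1 e2
    rw [hdeg.1] at e1
    rw [hdeg.2] at e2
    rw [hz1] at e1
    rw [hz2] at e2
    exact zero_ne_one (e1.trans e2)
  · -- build the triangle circuit
    set c3 : GChord n := ⟨(i, k), h1i, hij.trans hjk, hkn, hdeg⟩ with hc3
    have hc3v : c3.val = (i, k) := rfl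
    set A : Finset (GChord n) := {c1, c2, c3} with hA
    have hc1A : c1 ∈ A := by simp [hA]
    have hc2A : c2 ∈ A := by simp [hA]
    have hc3A : c3 ∈ A := by simp [hA]
    have hmemA : ∀ e ∈ A, e = c1 ∨ e = c2 ∨ e = c3 := by
      intro e he
      simpa [hA] using he
    have h12 : c1 ≠ c2 := chord_ne_of_val (by rw [hc1v, hc2v]; simp; omega)
    have h13 : c1 ≠ c3 := chord_ne_of_val (by rw [hc1v, hc3v]; simp; omega)
    have h23 : c2 ≠ c3 := chord_ne_of_val (by rw [hc2v, hc3v]; simp; omega)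
    have hvert : ∀ x : ℕ, diagDeg A x ≠ 0 → x = i ∨ x = j ∨ x = k := by
      intro x hx
      rw [diagDeg] at hx
      obtain ⟨e, he⟩ := Finset.card_pos.mp (Nat.pos_of_ne_zero hx)
      rw [Finset.mem_filter] at he
      obtain ⟨heA, hei⟩ := he
      rcases hmemA e heA with rfl | rfl | rfl
      · rw [hc1v] at hei; simp at hei; omega
      · rw [hc2v] at hei; simp at hei; omega
      · rw [hc3v] at hei; simp at hei; omega
    have hdegi : diagDeg A i = 2 := by
      apply deg_pair (c := c1) (d := c3) ?_ hc1A hc3A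
        (Or.inl (by rw [hc1v])) (Or.inl (by rw [hc3v])) h13
      intro e heA hei
      rcases hmemA e heA with rfl | rfl | rfl
      · exact Or.inl rfl
      · rw [hc2v] at hei; simp at hei; omega
      · exact Or.inr rfl
    have hdegj : diagDeg A j = 2 := by
      apply deg_pair (c := c1) (d := c2) ?_ hc1A hc2A
        (Or.inr (by rw [hc1v])) (Or.inl (by rw [hc2v])) h12
      intro e heA hei
      rcases hmemA e heA with rfl | rfl | rfl
      · exact Or.inl rfl
      · exact Or.inr rfl
      · rw [hc3v] at hei; simp at hei; omega
    have hdegk : diagDeg A k = 2 := by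
      apply deg_pair (c := c2) (d := c3) ?_ hc2A hc3A
        (Or.inr (by rw [hc2v])) (Or.inr (by rw [hc3v])) h23
      intro e heA hei
      rcases hmemA e heA with rfl | rfl | rfl
      · rw [hc1v] at hei; simp at hei; omega
      · exact Or.inl rfl
      · exact Or.inr rfl
    have hcirc : IsCircuit A := by
      refine ⟨⟨c1, hc1A⟩, ?_, ?_⟩
      · intro x hx
        rcases hvert x hx with rfl | rfl | rfl
        · exact hdegi
        · exact hdegj
        · exact hdegk
      · intro a b ha hb
        have hsym : Symmetric (diagAdj A) := fun x y h => diagAdj_symm h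
        have hRsym : Symmetric (Relation.ReflTransGen (diagAdj A)) :=
          fun x y h => (@Relation.ReflTransGen.symmetric _ (diagAdj A) ⟨hsym⟩).symm x y h
        have hfromi : ∀ x : ℕ, x = i ∨ x = j ∨ x = k →
            Relation.ReflTransGen (diagAdj A) i x := by
          rintro x (rfl | rfl | rfl)
          · exact Relation.ReflTransGen.refl
          · exact Relation.ReflTransGen.single ⟨c1, hc1A, Or.inl hc1v⟩
          · exact Relation.ReflTransGen.single ⟨c3, hc3A, Or.inl hc3v⟩
        exact (hRsym (hfromi a (hvert a ha))).trans (hfromi b (hvert b hb))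
    have hleast : ∀ b ∈ A, b ≠ c3 → prec c3 b := by
      intro b hb hbne
      rcases hmemA b hb with rfl | rfl | rfl
      · exact hadm c3 b (by rw [hc1v, hc3v]; simp; omega)
      · exact hadm c3 b (by rw [hc2v, hc3v]; simp; omega)
      · exact absurd rfl hbne
    refine h1 (A.erase c3) ?_ ⟨A, c3, hcirc, hc3A, hleast, rfl⟩
    intro e he
    rw [Finset.mem_erase] at he
    obtain ⟨hene, heA⟩ := he
    rcases hmemA e heA with rfl | rfl | rfl
    · exact hc1S
    · exact hc2S
    · exact absurd rfl hene

/-- Case 2 of non-gravity: `{i,k}, {j,k}, {j,l} ∈ S` with `i < j < k < l` contradicts (1). -/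
lemma caseB {S : Finset (GChord n)} (hn : 3 ≤ n)
    {prec : GChord n → GChord n → Prop}
    (hadm : ∀ c d : GChord n, c.val.2 - c.val.1 > d.val.2 - d.val.1 → prec c d)
    (h1 : ∀ B ⊆ S, ¬ IsBrokenCircuit prec B)
    {z : ℕ → ℂ} (hz1 : z 1 = 0) (hz2 : z (n - 1) = 1)
    (hzS : ∀ c ∈ S, z c.val.1 = z c.val.2)
    {i j k l : ℕ} (hij : i < j) (hjk : j < k) (hkl : k < l)
    (m1 : memPair S i k) (m2 : memPair S j k) (m3 : memPair S j l) : False := by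
  classical
  obtain ⟨c1, hc1S, hc1v⟩ := m1
  obtain ⟨c2, hc2S, hc2v⟩ := m2
  obtain ⟨c3, hc3S, hc3v⟩ := m3
  have p1 := c1.property
  have p3 := c3.property
  rw [hc1v] at p1
  rw [hc3v] at p3
  obtain ⟨h1i, -, -, -⟩ := p1
  obtain ⟨-, -, hln, -⟩ := p3
  by_cases hdeg : i = 1 ∧ l = n - 1
  · have e1 := hzS c1 hc1S
    have e2 := hzS c2 hc2S
    have e3 := hzS c3 hc3S
    rw [hc1v] at e1
    rw [hc2v] at e2
    rw [hc3v] at e3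
    simp only at e1 e2 e3
    rw [hdeg.1] at e1
    rw [hdeg.2] at e3
    rw [hz1] at e1
    rw [hz2] at e3
    exact zero_ne_one ((e1.trans e2.symm).trans e3)
  · set c4 : GChord n := ⟨(i, l), h1i, hij.trans (hjk.trans hkl), hln, hdeg⟩ with hc4
    have hc4v : c4.val = (i, l) := rfl
    set A : Finset (GChord n) := {c1, c2, c3, c4} with hA
    have hc1A : c1 ∈ A := by simp [hA]
    have hc2A : c2 ∈ A := by simp [hA]
    have hc3A : c3 ∈ A := by simp [hA]
    have hc4A : c4 ∈ A := by simp [hA]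
    have hmemA : ∀ e ∈ A, e = c1 ∨ e = c2 ∨ e = c3 ∨ e = c4 := by
      intro e he
      simpa [hA] using he
    have h12 : c1 ≠ c2 := chord_ne_of_val (by rw [hc1v, hc2v]; simp; omega)
    have h13 : c1 ≠ c3 := chord_ne_of_val (by rw [hc1v, hc3v]; simp; omega)
    have h14 : c1 ≠ c4 := chord_ne_of_val (by rw [hc1v, hc4v]; simp; omega)
    have h23 : c2 ≠ c3 := chord_ne_of_val (by rw [hc2v, hc3v]; simp; omega)
    have h24 : c2 ≠ c4 := chord_ne_of_val (by rw [hc2v, hc4v]; simp; omega)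
    have h34 : c3 ≠ c4 := chord_ne_of_val (by rw [hc3v, hc4v]; simp; omega)
    have hvert : ∀ x : ℕ, diagDeg A x ≠ 0 → x = i ∨ x = j ∨ x = k ∨ x = l := by
      intro x hx
      rw [diagDeg] at hx
      obtain ⟨e, he⟩ := Finset.card_pos.mp (Nat.pos_of_ne_zero hx)
      rw [Finset.mem_filter] at he
      obtain ⟨heA, hei⟩ := he
      rcases hmemA e heA with rfl | rfl | rfl | rfl
      · rw [hc1v] at hei; simp at hei; omega
      · rw [hc2v] at hei; simp at hei; omega
      · rw [hc3v] at hei; simp at hei; omega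
      · rw [hc4v] at hei; simp at hei; omega
    have hdegi : diagDeg A i = 2 := by
      apply deg_pair (c := c1) (d := c4) ?_ hc1A hc4A
        (Or.inl (by rw [hc1v])) (Or.inl (by rw [hc4v])) h14
      intro e heA hei
      rcases hmemA e heA with rfl | rfl | rfl | rfl
      · exact Or.inl rfl
      · rw [hc2v] at hei; simp at hei; omega
      · rw [hc3v] at hei; simp at hei; omega
      · exact Or.inr rfl
    have hdegj : diagDeg A j = 2 := by
      apply deg_pair (c := c2) (d := c3) ?_ hc2A hc3A
        (Or.inl (by rw [hc2v])) (Or.inl (by rw [hc3v])) h23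
      intro e heA hei
      rcases hmemA e heA with rfl | rfl | rfl | rfl
      · rw [hc1v] at hei; simp at hei; omega
      · exact Or.inl rfl
      · exact Or.inr rfl
      · rw [hc4v] at hei; simp at hei; omega
    have hdegk : diagDeg A k = 2 := by
      apply deg_pair (c := c1) (d := c2) ?_ hc1A hc2A
        (Or.inr (by rw [hc1v])) (Or.inr (by rw [hc2v])) h12
      intro e heA hei
      rcases hmemA e heA with rfl | rfl | rfl | rfl
      · exact Or.inl rfl
      · exact Or.inr rfl
      · rw [hc3v] at hei; simp at hei; omega
      · rw [hc4v] at hei; simp at hei; omega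
    have hdegl : diagDeg A l = 2 := by
      apply deg_pair (c := c3) (d := c4) ?_ hc3A hc4A
        (Or.inr (by rw [hc3v])) (Or.inr (by rw [hc4v])) h34
      intro e heA hei
      rcases hmemA e heA with rfl | rfl | rfl | rfl
      · rw [hc1v] at hei; simp at hei; omega
      · rw [hc2v] at hei; simp at hei; omega
      · exact Or.inl rfl
      · exact Or.inr rfl
    have hcirc : IsCircuit A := by
      refine ⟨⟨c1, hc1A⟩, ?_, ?_⟩
      · intro x hx
        rcases hvert x hx with rfl | rfl | rfl | rfl
        · exact hdegi
        · exact hdegj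
        · exact hdegk
        · exact hdegl
      · intro a b ha hb
        have hsym : Symmetric (diagAdj A) := fun x y h => diagAdj_symm h
        have hRsym : Symmetric (Relation.ReflTransGen (diagAdj A)) :=
          fun x y h => (@Relation.ReflTransGen.symmetric _ (diagAdj A) ⟨hsym⟩).symm x y h
        have hfromi : ∀ x : ℕ, x = i ∨ x = j ∨ x = k ∨ x = l →
            Relation.ReflTransGen (diagAdj A) i x := by
          rintro x (rfl | rfl | rfl | rfl)
          · exact Relation.ReflTransGen.refl
          · exact (Relation.ReflTransGen.single ⟨c1, hc1A, Or.inl hc1v⟩).trans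
              (Relation.ReflTransGen.single (diagAdj_symm ⟨c2, hc2A, Or.inl hc2v⟩))
          · exact Relation.ReflTransGen.single ⟨c1, hc1A, Or.inl hc1v⟩
          · exact Relation.ReflTransGen.single ⟨c4, hc4A, Or.inl hc4v⟩
        exact (hRsym (hfromi a (hvert a ha))).trans (hfromi b (hvert b hb))
    have hleast : ∀ b ∈ A, b ≠ c4 → prec c4 b := by
      intro b hb hbne
      rcases hmemA b hb with rfl | rfl | rfl | rfl
      · exact hadm c4 b (by rw [hc1v, hc4v]; simp; omega)
      · exact hadm c4 b (by rw [hc2v, hc4v]; simp; omega)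
      · exact hadm c4 b (by rw [hc3v, hc4v]; simp; omega)
      · exact absurd rfl hbne
    refine h1 (A.erase c4) ?_ ⟨A, c4, hcirc, hc4A, hleast, rfl⟩
    intro e he
    rw [Finset.mem_erase] at he
    obtain ⟨hene, heA⟩ := he
    rcases hmemA e heA with rfl | rfl | rfl | rfl
    · exact hc1S
    · exact hc2S
    · exact hc3S
    · exact absurd rfl hene

end Forward

/-- fix `n ≥ 3` and an admissible total order `≺` on `C_n`.  For every
`S ⊆ C_n`, the following are equivalent: (1) no subset of `S` is a broken circuit and the
linear system `z 1 = 0`, `z (n-1) = 1`, `z i = z j` for `{i,j} ∈ S` is solvable over `ℂ`;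
(2) `S` is a gravity diagram. -/
theorem nbc_iff_gravity (n : ℕ) (hn : 3 ≤ n)
    (prec : GChord n → GChord n → Prop)
    (hprec : IsStrictTotalOrder (GChord n) prec)
    (hadm : ∀ c d : GChord n, c.val.2 - c.val.1 > d.val.2 - d.val.1 → prec c d)
    (S : Finset (GChord n)) :
    ((∀ B ⊆ S, ¬ IsBrokenCircuit prec B) ∧
      ∃ z : ℕ → ℂ, z 1 = 0 ∧ z (n - 1) = 1 ∧ ∀ c ∈ S, z c.val.1 = z c.val.2) ↔
    IsGravityDiagram S := by
  constructor
  · rintro ⟨h1, z, hz1, hz2, hzS⟩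
    by_contra hg
    rw [IsGravityDiagram] at hg
    rcases not_and_or.mp hg with h | h
    · obtain ⟨i, j, k, hij, hjk, m1, m2⟩ := not_not.mp h
      exact caseA hn hadm h1 hz1 hz2 hzS hij hjk m1 m2
    · obtain ⟨i, j, k, l, hij, hjk, hkl, m1, m2, m3⟩ := not_not.mp h
      exact caseB hn hadm h1 hz1 hz2 hzS hij hjk hkl m1 m2 m3
  · intro hg
    exact ⟨fun B hBS => no_broken_circuit hg hprec hadm hBS, exists_solution hg hn⟩
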